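/- For every c > 0, t > 0 and y > 0, with λ := c²/2, one has ∫_0^∞ 2λ x e^{−c x} p_t(x,y) dx = e^{−λ t} · 2λ y e^{−c y}. That is, the measure ν with density 2λ x e^{−c x} on (0,∞) is a left eigenmeasure of the absorbed drifted Brownian semigroup with eigenvalue e^{−λ t}. -/

import Mathlib

open Real MeasureTheory Set

lemma integrable_shift_gauss (b y : ℝ) (hb : 0 < b) :
    Integrable (fun x : ℝ => x * Real.exp (-b * (x - y) ^ 2)) := by
  have h1 := (integrable_mul_exp_neg_mul_sq hb).comp_sub_right y
  have h2 := ((integrable_exp_neg_mul_sq hb).comp_sub_right y).const_mul y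
  have := h1.add h2
  refine this.congr (Filter.Eventually.of_forall fun x => ?_)
  simp only [Pi.add_apply]
  ring

lemma gauss_odd_zero (b : ℝ) (hb : 0 < b) :
    ∫ x : ℝ, x * Real.exp (-b * x ^ 2) = 0 := by
  have h := integral_neg_eq_self (fun x : ℝ => x * Real.exp (-b * x ^ 2)) volume
  have h2 : ∫ x : ℝ, (-x) * Real.exp (-b * (-x) ^ 2)
      = ∫ x : ℝ, -(x * Real.exp (-b * x ^ 2)) := by
    congr 1; ext x; ring_nf
  rw [h2, integral_neg] at h
  linarith

lemma gauss_mean (b y : ℝ) (hb : 0 < b) :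
    ∫ x : ℝ, x * Real.exp (-b * (x - y) ^ 2) = y * Real.sqrt (π / b) := by
  rw [← integral_add_right_eq_self (fun x : ℝ => x * Real.exp (-b * (x - y) ^ 2)) y]
  have : ∀ x : ℝ, (x + y) * Real.exp (-b * (x + y - y) ^ 2)
      = x * Real.exp (-b * x ^ 2) + y * Real.exp (-b * x ^ 2) := by
    intro x; ring_nf
  simp_rw [this]
  rw [integral_add (integrable_mul_exp_neg_mul_sq hb)
      ((integrable_exp_neg_mul_sq hb).const_mul y),
    gauss_odd_zero b hb, integral_const_mul, integral_gaussian, zero_add]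

lemma key_int (b y : ℝ) (hb : 0 < b) :
    ∫ x in Ioi (0 : ℝ), x * (Real.exp (-b * (x - y) ^ 2) - Real.exp (-b * (x + y) ^ 2))
      = y * Real.sqrt (π / b) := by
  set f : ℝ → ℝ := fun x => x * Real.exp (-b * (x - y) ^ 2) with hf
  have hfi : Integrable f := integrable_shift_gauss b y hb
  have hgi : Integrable (fun x : ℝ => x * Real.exp (-b * (x + y) ^ 2)) := by
    have := integrable_shift_gauss b (-y) hb
    refine this.congr (Filter.Eventually.of_forall fun x => ?_)
    ring_nf
  have hsplit : (∫ x in Ioi (0 : ℝ),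
        x * (Real.exp (-b * (x - y) ^ 2) - Real.exp (-b * (x + y) ^ 2)))
      = (∫ x in Ioi (0 : ℝ), f x) - ∫ x in Ioi (0 : ℝ), x * Real.exp (-b * (x + y) ^ 2) := by
    rw [← integral_sub hfi.integrableOn hgi.integrableOn]
    congr 1; ext x; ring
  have hneg : (∫ x in Ioi (0 : ℝ), x * Real.exp (-b * (x + y) ^ 2))
      = - ∫ x in Iic (0 : ℝ), f x := by
    have h1 : (∫ x in Ioi (0 : ℝ), f (-x)) = ∫ x in Iic (-(0:ℝ)), f x :=
      integral_comp_neg_Ioi 0 f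
    have h2 : (∫ x in Ioi (0 : ℝ), f (-x))
        = ∫ x in Ioi (0 : ℝ), -(x * Real.exp (-b * (x + y) ^ 2)) := by
      congr 1; ext x; simp only [hf]; ring_nf
    rw [h2, integral_neg, neg_zero] at h1
    linarith
  rw [hsplit, hneg, sub_neg_eq_add, add_comm, intervalIntegral.integral_Iic_add_Ioi hfi.integrableOn
    hfi.integrableOn, gauss_mean b y hb]

theorem nu_is_left_eigenmeasure
    (c t y : ℝ) (hc : 0 < c) (ht : 0 < t) (hy : 0 < y) :
    (∫ x in Set.Ioi (0 : ℝ),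
        2 * (c ^ 2 / 2) * x * Real.exp (-(c * x)) *
          (Real.exp (-(c * (y - x)) - c ^ 2 / 2 * t) * (Real.sqrt (2 * π * t))⁻¹ *
            (Real.exp (-(x - y) ^ 2 / (2 * t)) - Real.exp (-(x + y) ^ 2 / (2 * t)))))
      = Real.exp (-(c ^ 2 / 2) * t) * (2 * (c ^ 2 / 2) * y * Real.exp (-(c * y))) := by
  have ht' : (0:ℝ) < 1 / (2 * t) := by positivity
  set K : ℝ := 2 * (c ^ 2 / 2) * Real.exp (-(c * y) - c ^ 2 / 2 * t) * (Real.sqrt (2 * π * t))⁻¹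
    with hK
  have hpt : ∀ x : ℝ,
      2 * (c ^ 2 / 2) * x * Real.exp (-(c * x)) *
          (Real.exp (-(c * (y - x)) - c ^ 2 / 2 * t) * (Real.sqrt (2 * π * t))⁻¹ *
            (Real.exp (-(x - y) ^ 2 / (2 * t)) - Real.exp (-(x + y) ^ 2 / (2 * t))))
      = K * (x * (Real.exp (-(1/(2*t)) * (x - y) ^ 2) - Real.exp (-(1/(2*t)) * (x + y) ^ 2))) := by
    intro x
    have e1 : Real.exp (-(c * x)) * Real.exp (-(c * (y - x)) - c ^ 2 / 2 * t)
        = Real.exp (-(c * y) - c ^ 2 / 2 * t) := by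
      rw [← Real.exp_add]; ring_nf
    have e2 : Real.exp (-(x - y) ^ 2 / (2 * t)) = Real.exp (-(1/(2*t)) * (x - y) ^ 2) := by
      congr 1; field_simp
    have e3 : Real.exp (-(x + y) ^ 2 / (2 * t)) = Real.exp (-(1/(2*t)) * (x + y) ^ 2) := by
      congr 1; field_simp
    rw [e2, e3, hK, ← e1]; ring
  simp_rw [hpt]
  rw [integral_const_mul, key_int _ y ht']
  have hsq : Real.sqrt (π / (1 / (2 * t))) = Real.sqrt (2 * π * t) := by
    congr 1; field_simp
  have hpos : (0:ℝ) < Real.sqrt (2 * π * t) := by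
    apply Real.sqrt_pos.mpr; positivity
  rw [hsq, hK]
  have h1 : Real.exp (-(c * y) - c ^ 2 / 2 * t)
      = Real.exp (-(c ^ 2 / 2) * t) * Real.exp (-(c * y)) := by
    rw [← Real.exp_add]; ring_nf
  rw [h1]
  field_simp
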